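/- arXiv:2502.03985 — 5 statements merged into one kernel-verified Lean document; each statement's English description precedes it below -/
import Mathlib

section
/- Assume in addition that R_ρ is positive semidefinite. Let I ∈ ℂ^N be nonzero and ξ ∈ ℂ with (X₀ − i·R_ρ)·I = ξ·R₀·I. Then Im ξ ≤ 0, and Im ξ = 0 if and only if R_ρ·I = 0. -/
open Matrix Complex
open scoped ComplexOrder

private lemma mapC_isHermitian {N : ℕ} {M : Matrix (Fin N) (Fin N) ℝ} (h : M.IsSymm) :
    (M.map Complex.ofReal).IsHermitian := by
  have hmap := Matrix.conjTranspose_map (A := M) Complex.ofReal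
    (fun x => by simp [Complex.conj_ofReal])
  unfold Matrix.IsHermitian
  rw [← hmap, Matrix.conjTranspose_eq_transpose_of_trivial, h]

private lemma mapC_posSemidef {N : ℕ} {M : Matrix (Fin N) (Fin N) ℝ} (h : M.PosSemidef) :
    (M.map Complex.ofReal).PosSemidef := by
  obtain ⟨B, hB⟩ : ∃ B : Matrix (Fin N) (Fin N) ℝ, M = Bᴴ * B := by
    open MatrixOrder in
    obtain ⟨B, hB⟩ := CStarAlgebra.nonneg_iff_eq_star_mul_self.mp h.nonneg
    exact ⟨B, hB⟩
  have hmap := Matrix.conjTranspose_map (A := B) Complex.ofReal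
    (fun x => by simp [Complex.conj_ofReal])
  have key : M.map Complex.ofReal = (B.map Complex.ofReal)ᴴ * (B.map Complex.ofReal) := by
    rw [hB, show (Bᴴ * B).map Complex.ofReal = Bᴴ.map Complex.ofReal * B.map Complex.ofReal from
      Matrix.map_mul (f := Complex.ofRealHom), hmap]
  rw [key]
  exact Matrix.posSemidef_conjTranspose_mul_self _

private lemma im_dot_herm {N : ℕ} {A : Matrix (Fin N) (Fin N) ℂ} (hA : A.IsHermitian)
    (x : Fin N → ℂ) : (star x ⬝ᵥ A *ᵥ x).im = 0 := by
  rw [← Complex.conj_eq_iff_im]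
  show star (star x ⬝ᵥ A *ᵥ x) = star x ⬝ᵥ A *ᵥ x
  rw [← Matrix.star_dotProduct_star (v := A *ᵥ x) (w := star x), star_star,
    Matrix.star_mulVec, ← Matrix.dotProduct_mulVec, hA.eq]

/-- For a positive semidefinite loss matrix, the imaginary part of a lossy
characteristic number is nonpositive and vanishes precisely for lossless modes. -/
theorem lossy_cm_im_nonpos
    (N : ℕ) (hN : 0 < N)
    (X₀ Rρ R₀ : Matrix (Fin N) (Fin N) ℝ)
    (hX : X₀.IsSymm) (hRρ : Rρ.IsSymm) (hR₀ : R₀.IsSymm)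
    (hPD : R₀.PosDef) (hPSD : Rρ.PosSemidef)
    (I : Fin N → ℂ) (hI : I ≠ 0) (ξ : ℂ)
    (heig : (X₀.map Complex.ofReal - Complex.I • Rρ.map Complex.ofReal).mulVec I
            = ξ • (R₀.map Complex.ofReal).mulVec I) :
    ξ.im ≤ 0 ∧ (ξ.im = 0 ↔ (Rρ.map Complex.ofReal).mulVec I = 0) := by
  set A := X₀.map Complex.ofReal with hAdef
  set Rc := Rρ.map Complex.ofReal with hRcdef
  set R0c := R₀.map Complex.ofReal with hR0cdef
  set a := star I ⬝ᵥ A *ᵥ I with hadef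
  set b := star I ⬝ᵥ Rc *ᵥ I with hbdef
  set c := star I ⬝ᵥ R0c *ᵥ I with hcdef
  have hRcPSD : Rc.PosSemidef := mapC_posSemidef hPSD
  have hR0cPSD : R0c.PosSemidef := mapC_posSemidef hPD.posSemidef
  have ha_im : a.im = 0 := im_dot_herm (mapC_isHermitian hX) I
  have hb_im : b.im = 0 := im_dot_herm (mapC_isHermitian hRρ) I
  have hc_im : c.im = 0 := im_dot_herm (mapC_isHermitian hR₀) I
  have hb_re : 0 ≤ b.re := hRcPSD.re_dotProduct_nonneg I
  -- c has positive real part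
  have hR0cI : R0c *ᵥ I ≠ 0 := by
    intro h0
    have hdet : IsUnit R0c.det := by
      have hmm : R0c = Complex.ofRealHom.mapMatrix R₀ := rfl
      rw [hmm, ← RingHom.map_det]
      simp only [isUnit_iff_ne_zero, ne_eq, Complex.ofRealHom_eq_coe, Complex.ofReal_eq_zero]
      exact hPD.det_pos.ne'
    have hinj : Function.Injective (R0c.mulVec) :=
      Matrix.mulVec_injective_iff_isUnit.mpr ((Matrix.isUnit_iff_isUnit_det _).mpr hdet)
    exact hI (hinj (by simpa using h0))
  have hc_ne : c ≠ 0 := fun h0 => hR0cI ((hR0cPSD.dotProduct_mulVec_zero_iff I).mp h0)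
  have hc_re : 0 < c.re := by
    rcases lt_or_eq_of_le (hR0cPSD.re_dotProduct_nonneg I) with h | h
    · exact h
    · exact absurd (Complex.ext h.symm hc_im) hc_ne
  -- take the dot product of the eigenvalue equation with star I
  have key : a - Complex.I * b = ξ * c := by
    have := congrArg (fun v => star I ⬝ᵥ v) heig
    simpa [hadef, hbdef, hcdef, Matrix.sub_mulVec, dotProduct_sub,
      Matrix.smul_mulVec, dotProduct_smul, smul_eq_mul, mul_assoc] using this
  have him' : -b.re = ξ.im * c.re := by
    have := congrArg Complex.im key
    simp only [Complex.sub_im, Complex.mul_im, Complex.I_re, Complex.I_im, ha_im, hb_im,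
      hc_im, zero_mul, one_mul, mul_zero, add_zero, zero_add, zero_sub] at this
    linarith [this]
  have hxi : ξ.im = -b.re / c.re := by
    field_simp
    linarith [him']
  constructor
  · rw [hxi]
    exact div_nonpos_of_nonpos_of_nonneg (by linarith) hc_re.le
  · constructor
    · intro h0
      have hbre0 : b.re = 0 := by
        have : -b.re = 0 := by rw [him', h0, zero_mul]
        linarith
      have hb0 : b = 0 := Complex.ext hbre0 hb_im
      exact (hRcPSD.dotProduct_mulVec_zero_iff I).mp hb0
    · intro h0
      have hb0 : b = 0 := by rw [hbdef, h0, dotProduct_zero]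
      have hbre : b.re = 0 := by rw [hb0]; rfl
      rw [hxi, hbre, neg_zero, zero_div]
end

section
/- Let X₀ and R₀ be functions from ℝ to real symmetric N×N matrices that are differentiable at ω₀ with ω₀ ≠ 0, let λ : ℝ → ℝ and I : ℝ → ℝ^N be differentiable at ω₀ with X₀(ω)·I(ω) = λ(ω)·R₀(ω)·I(ω) for all ω in a neighborhood of ω₀, I(ω₀)ᵀ·R₀(ω₀)·I(ω₀) ≠ 0, and λ(ω₀) = 0 (resonance). Then the modal Q-factor Q = ( I(ω₀)ᵀ·(ω₀·X₀'(ω₀))·I(ω₀) ) / ( 2·I(ω₀)ᵀ·R₀(ω₀)·I(ω₀) ) satisfies Q = (ω₀/2)·λ'(ω₀) exactly. -/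
/-- At resonance, the modal Q-factor equals `(ω₀/2)·λ'(ω₀)` exactly. -/
theorem modal_Q_factor_at_resonance
    (N : ℕ) (hN : 0 < N)
    (X₀ R₀ : ℝ → Matrix (Fin N) (Fin N) ℝ)
    (hsymX : ∀ ω, (X₀ ω).IsSymm) (hsymR : ∀ ω, (R₀ ω).IsSymm)
    (X₀' R₀' : Matrix (Fin N) (Fin N) ℝ) (ω₀ : ℝ) (hω₀ : ω₀ ≠ 0)
    (hdX : ∀ i j, HasDerivAt (fun ω => X₀ ω i j) (X₀' i j) ω₀)
    (hdR : ∀ i j, HasDerivAt (fun ω => R₀ ω i j) (R₀' i j) ω₀)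
    (lam : ℝ → ℝ) (lam' : ℝ) (I : ℝ → Fin N → ℝ)
    (hlam : HasDerivAt lam lam' ω₀)
    (hI : ∀ i, DifferentiableAt ℝ (fun ω => I ω i) ω₀)
    (heig : ∀ᶠ ω in nhds ω₀, (X₀ ω).mulVec (I ω) = lam ω • (R₀ ω).mulVec (I ω))
    (hnz : dotProduct (I ω₀) ((R₀ ω₀).mulVec (I ω₀)) ≠ 0)
    (hres : lam ω₀ = 0) :
    dotProduct (I ω₀) ((ω₀ • X₀').mulVec (I ω₀)) /
        (2 * dotProduct (I ω₀) ((R₀ ω₀).mulVec (I ω₀)))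
      = ω₀ / 2 * lam' := by
  classical
  set I₀ := I ω₀ with hI₀
  set I' : Fin N → ℝ := fun i => deriv (fun ω => I ω i) ω₀ with hI'def
  have hdI : ∀ i, HasDerivAt (fun ω => I ω i) (I' i) ω₀ := fun i => (hI i).hasDerivAt
  have heig0 : (X₀ ω₀).mulVec I₀ = 0 := by
    have h := heig.self_of_nhds
    rw [hres, zero_smul] at h
    exact h
  -- scalar functions
  have hFd : HasDerivAt (fun ω => ∑ i, ∑ j, I₀ i * (X₀ ω i j * I ω j))
      (∑ i, ∑ j, I₀ i * (X₀' i j * I ω₀ j + X₀ ω₀ i j * I' j)) ω₀ := by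
    apply HasDerivAt.fun_sum; intro i _
    apply HasDerivAt.fun_sum; intro j _
    exact ((hdX i j).mul (hdI j)).const_mul (I₀ i)
  have hGd : HasDerivAt (fun ω => ∑ i, ∑ j, I₀ i * (R₀ ω i j * I ω j))
      (∑ i, ∑ j, I₀ i * (R₀' i j * I ω₀ j + R₀ ω₀ i j * I' j)) ω₀ := by
    apply HasDerivAt.fun_sum; intro i _
    apply HasDerivAt.fun_sum; intro j _
    exact ((hdR i j).mul (hdI j)).const_mul (I₀ i)
  have hHd : HasDerivAt
      (fun ω => (∑ i, ∑ j, I₀ i * (X₀ ω i j * I ω j))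
        - lam ω * (∑ i, ∑ j, I₀ i * (R₀ ω i j * I ω j)))
      ((∑ i, ∑ j, I₀ i * (X₀' i j * I ω₀ j + X₀ ω₀ i j * I' j))
        - (lam' * (∑ i, ∑ j, I₀ i * (R₀ ω₀ i j * I ω₀ j))
           + lam ω₀ * (∑ i, ∑ j, I₀ i * (R₀' i j * I ω₀ j + R₀ ω₀ i j * I' j)))) ω₀ :=
    hFd.sub (hlam.mul hGd)
  -- the function is eventually zero
  have hzero : (fun ω => (∑ i, ∑ j, I₀ i * (X₀ ω i j * I ω j))
        - lam ω * (∑ i, ∑ j, I₀ i * (R₀ ω i j * I ω j)))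
      =ᶠ[nhds ω₀] (fun _ => (0:ℝ)) := by
    filter_upwards [heig] with ω hω
    have h1 : dotProduct I₀ ((X₀ ω).mulVec (I ω))
        = lam ω * dotProduct I₀ ((R₀ ω).mulVec (I ω)) := by
      rw [hω, dotProduct_smul]
      rfl
    have e1 : dotProduct I₀ ((X₀ ω).mulVec (I ω))
        = ∑ i, ∑ j, I₀ i * (X₀ ω i j * I ω j) := by
      simp [dotProduct, Matrix.mulVec, Finset.mul_sum]
    have e2 : dotProduct I₀ ((R₀ ω).mulVec (I ω))
        = ∑ i, ∑ j, I₀ i * (R₀ ω i j * I ω j) := by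
      simp [dotProduct, Matrix.mulVec, Finset.mul_sum]
    simp only [← e1, ← e2, h1, sub_self]
  have hHd0 : HasDerivAt
      (fun ω => (∑ i, ∑ j, I₀ i * (X₀ ω i j * I ω j))
        - lam ω * (∑ i, ∑ j, I₀ i * (R₀ ω i j * I ω j))) 0 ω₀ :=
    (hasDerivAt_const ω₀ (0:ℝ)).congr_of_eventuallyEq hzero
  have hD0 : (∑ i, ∑ j, I₀ i * (X₀' i j * I ω₀ j + X₀ ω₀ i j * I' j))
        - (lam' * (∑ i, ∑ j, I₀ i * (R₀ ω₀ i j * I ω₀ j))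
           + lam ω₀ * (∑ i, ∑ j, I₀ i * (R₀' i j * I ω₀ j + R₀ ω₀ i j * I' j))) = 0 :=
    hHd.unique hHd0
  -- cross term vanishes
  have hcross : (∑ i, ∑ j, I₀ i * (X₀ ω₀ i j * I' j)) = 0 := by
    rw [Finset.sum_comm]
    have : ∀ j, (∑ i, I₀ i * (X₀ ω₀ i j * I' j)) = ((X₀ ω₀).mulVec I₀ j) * I' j := by
      intro j
      rw [Matrix.mulVec, dotProduct, Finset.sum_mul]
      apply Finset.sum_congr rfl
      intro i _
      have hs' : X₀ ω₀ j i = X₀ ω₀ i j := by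
        have := congrFun (congrFun (hsymX ω₀) i) j
        simpa [Matrix.transpose_apply] using this
      rw [hs']
      ring
    simp only [this, heig0, Pi.zero_apply, zero_mul, Finset.sum_const_zero]
  -- key identity
  have hkey : (∑ i, ∑ j, I₀ i * (X₀' i j * I ω₀ j))
      = lam' * (∑ i, ∑ j, I₀ i * (R₀ ω₀ i j * I ω₀ j)) := by
    have expand : (∑ i, ∑ j, I₀ i * (X₀' i j * I ω₀ j + X₀ ω₀ i j * I' j))
        = (∑ i, ∑ j, I₀ i * (X₀' i j * I ω₀ j)) + (∑ i, ∑ j, I₀ i * (X₀ ω₀ i j * I' j)) := by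
      rw [← Finset.sum_add_distrib]
      apply Finset.sum_congr rfl
      intro i _
      rw [← Finset.sum_add_distrib]
      apply Finset.sum_congr rfl
      intro j _
      ring
    rw [expand, hcross, add_zero, hres, zero_mul, add_zero] at hD0
    linarith
  -- convert the goal
  have e2 : dotProduct I₀ ((R₀ ω₀).mulVec I₀)
      = ∑ i, ∑ j, I₀ i * (R₀ ω₀ i j * I ω₀ j) := by
    simp [dotProduct, Matrix.mulVec, Finset.mul_sum, hI₀]
  have e1 : dotProduct I₀ ((ω₀ • X₀').mulVec I₀)
      = ω₀ * ∑ i, ∑ j, I₀ i * (X₀' i j * I ω₀ j) := by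
    rw [Matrix.smul_mulVec, dotProduct_smul]
    simp [dotProduct, Matrix.mulVec, Finset.mul_sum, hI₀, smul_eq_mul]
  rw [e1, hkey, e2]
  rw [e2] at hnz
  field_simp
  have hnz' : ∑ x, ∑ x_1, I₀ x * R₀ ω₀ x x_1 * I ω₀ x_1 ≠ 0 := by simpa only [mul_assoc] using hnz
  rw [mul_div_assoc, div_self hnz', mul_one]
end

section
/- Let X₀ and R₀ be real symmetric N×N matrices, let ρ ↦ R_ρ(ρ) be a function from ℝ to real symmetric N×N matrices differentiable at ρ₀, and let ξ : ℝ → ℂ and I : ℝ → ℂ^N be differentiable at ρ₀ with (X₀ − i·R_ρ(ρ))·I(ρ) = ξ(ρ)·R₀·I(ρ) for all ρ in a neighborhood of ρ₀. If I(ρ₀)ᵀ·R₀·I(ρ₀) ≠ 0, then ξ'(ρ₀) = −i · ( I(ρ₀)ᵀ·R_ρ'(ρ₀)·I(ρ₀) ) / ( I(ρ₀)ᵀ·R₀·I(ρ₀) ), where R_ρ' denotes the entrywise derivative and ᵀ the non-conjugate transpose. -/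
open Finset

/-- Derivative of a lossy characteristic number with respect to the design
variable: `ξ'(ρ₀) = −i·(Iᵀ R_ρ'(ρ₀) I)/(Iᵀ R₀ I)`. -/
theorem lossy_cm_eigenvalue_design_derivative
    (N : ℕ) (hN : 0 < N)
    (X₀ R₀ : Matrix (Fin N) (Fin N) ℝ)
    (hX : X₀.IsSymm) (hR₀ : R₀.IsSymm)
    (Rρ : ℝ → Matrix (Fin N) (Fin N) ℝ)
    (hsym : ∀ ρ, (Rρ ρ).IsSymm)
    (Rρ' : Matrix (Fin N) (Fin N) ℝ) (ρ₀ : ℝ)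
    (hdRρ : ∀ i j, HasDerivAt (fun ρ => Rρ ρ i j) (Rρ' i j) ρ₀)
    (ξ : ℝ → ℂ) (ξ' : ℂ) (I : ℝ → Fin N → ℂ)
    (hξ : HasDerivAt ξ ξ' ρ₀)
    (hI : ∀ i, DifferentiableAt ℝ (fun ρ => I ρ i) ρ₀)
    (heig : ∀ᶠ ρ in nhds ρ₀,
      (X₀.map Complex.ofReal - Complex.I • (Rρ ρ).map Complex.ofReal).mulVec (I ρ)
        = ξ ρ • (R₀.map Complex.ofReal).mulVec (I ρ))
    (hnz : dotProduct (I ρ₀) ((R₀.map Complex.ofReal).mulVec (I ρ₀)) ≠ 0) :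
    ξ' = -Complex.I *
        (dotProduct (I ρ₀) ((Rρ'.map Complex.ofReal).mulVec (I ρ₀)) /
          dotProduct (I ρ₀) ((R₀.map Complex.ofReal).mulVec (I ρ₀))) := by
  classical
  set I₀ : Fin N → ℂ := I ρ₀ with hI₀def
  set ξ₀ : ℂ := ξ ρ₀ with hξ₀def
  set I' : Fin N → ℂ := fun i => deriv (fun ρ => I ρ i) ρ₀ with hI'def
  have hI' : ∀ i, HasDerivAt (fun ρ => I ρ i) (I' i) ρ₀ := fun i => (hI i).hasDerivAt
  set a : ℝ → Fin N → Fin N → ℂ :=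
    fun ρ i j => ((X₀ i j : ℂ) - Complex.I * (Rρ ρ i j : ℂ)) with hadef
  have ha : ∀ i j, HasDerivAt (fun ρ => a ρ i j) (-(Complex.I * (Rρ' i j : ℂ))) ρ₀ := by
    intro i j
    exact ((hasDerivAt_const ρ₀ ((X₀ i j : ℂ))).sub
      (((hdRρ i j).ofReal_comp).const_mul Complex.I)).congr_deriv (by simp)
  set S : ℂ := ∑ i, ∑ j, I₀ i * ((R₀ i j : ℂ) * I₀ j) with hSdef
  set T : ℂ := ∑ i, ∑ j, I₀ i * ((R₀ i j : ℂ) * I' j) with hTdef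
  set Q : ℂ := ∑ i, ∑ j, I₀ i * ((Rρ' i j : ℂ) * I₀ j) with hQdef
  set F : ℝ → ℂ := fun ρ =>
    (∑ i, ∑ j, I₀ i * (a ρ i j * I ρ j)) -
      ξ ρ * (∑ i, ∑ j, I₀ i * ((R₀ i j : ℂ) * I ρ j)) with hFdef
  -- F vanishes near ρ₀
  have hF0 : F =ᶠ[nhds ρ₀] fun _ => (0 : ℂ) := by
    filter_upwards [heig] with ρ hρ
    have key : ∀ i, ((X₀.map Complex.ofReal - Complex.I • (Rρ ρ).map Complex.ofReal).mulVec (I ρ)) i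
        = (ξ ρ • (R₀.map Complex.ofReal).mulVec (I ρ)) i := fun i => by rw [hρ]
    simp only [Matrix.mulVec, dotProduct, Matrix.sub_apply, Matrix.smul_apply,
      Matrix.map_apply, smul_eq_mul, Pi.smul_apply] at key
    show (∑ i, ∑ j, I₀ i * (a ρ i j * I ρ j)) -
      ξ ρ * (∑ i, ∑ j, I₀ i * ((R₀ i j : ℂ) * I ρ j)) = 0
    have : ∑ i, ∑ j, I₀ i * (a ρ i j * I ρ j)
        = ∑ i, I₀ i * (ξ ρ * ∑ j, (R₀ i j : ℂ) * I ρ j) := by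
      refine Finset.sum_congr rfl fun i _ => ?_
      rw [← key i, Finset.mul_sum]
    rw [this, Finset.mul_sum]
    rw [sub_eq_zero]
    refine Finset.sum_congr rfl fun i _ => ?_
    rw [Finset.mul_sum, Finset.mul_sum, Finset.mul_sum]
    refine Finset.sum_congr rfl fun j _ => ?_
    ring
  -- derivative of F
  set D : ℂ := (∑ i, ∑ j, I₀ i * ((-(Complex.I * (Rρ' i j : ℂ))) * I₀ j + a ρ₀ i j * I' j))
      - (ξ' * S + ξ₀ * T) with hDdef
  have hDF : HasDerivAt F D ρ₀ := by
    have h1 : HasDerivAt (fun ρ => ∑ i, ∑ j, I₀ i * (a ρ i j * I ρ j))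
        (∑ i, ∑ j, I₀ i * ((-(Complex.I * (Rρ' i j : ℂ))) * I₀ j + a ρ₀ i j * I' j)) ρ₀ := by
      refine HasDerivAt.fun_sum fun i _ => HasDerivAt.fun_sum fun j _ => ?_
      exact ((ha i j).mul (hI' j)).const_mul (I₀ i)
    have h2 : HasDerivAt (fun ρ => ξ ρ * (∑ i, ∑ j, I₀ i * ((R₀ i j : ℂ) * I ρ j)))
        (ξ' * S + ξ₀ * T) ρ₀ := by
      have hg : HasDerivAt (fun ρ => ∑ i, ∑ j, I₀ i * ((R₀ i j : ℂ) * I ρ j)) T ρ₀ := by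
        rw [hTdef]
        refine HasDerivAt.fun_sum fun i _ => HasDerivAt.fun_sum fun j _ => ?_
        exact ((hI' j).const_mul ((R₀ i j : ℂ))).const_mul (I₀ i)
      simpa [hSdef] using hξ.fun_mul hg
    exact h1.sub h2
  have hD0 : D = 0 := hDF.unique ((hasDerivAt_const ρ₀ (0 : ℂ)).congr_of_eventuallyEq hF0)
  -- cancellation
  have heig0 := heig.self_of_nhds
  have hcomp : ∀ j, (∑ i, a ρ₀ j i * I₀ i) = ξ₀ * ∑ i, (R₀ j i : ℂ) * I₀ i := by
    intro j
    have := congrFun heig0 j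
    simpa [Matrix.mulVec, dotProduct, Matrix.sub_apply, Matrix.smul_apply,
      Matrix.map_apply, smul_eq_mul, Pi.smul_apply, hadef, ← hI₀def, ← hξ₀def] using this
  have hC : (∑ i, ∑ j, I₀ i * (a ρ₀ i j * I' j)) = ξ₀ * T := by
    rw [Finset.sum_comm]
    have : ∀ j, (∑ i, I₀ i * (a ρ₀ i j * I' j)) = ξ₀ * ∑ i, I₀ i * ((R₀ i j : ℂ) * I' j) := by
      intro j
      have h1 : (∑ i, I₀ i * (a ρ₀ i j * I' j)) = (∑ i, a ρ₀ j i * I₀ i) * I' j := by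
        rw [Finset.sum_mul]
        refine Finset.sum_congr rfl fun i _ => ?_
        have hx : X₀ i j = X₀ j i := hX.apply j i
        have hr : Rρ ρ₀ i j = Rρ ρ₀ j i := (hsym ρ₀).apply j i
        simp only [hadef, hx, hr]
        ring
      rw [h1, hcomp j, Finset.mul_sum, Finset.mul_sum, Finset.sum_mul]
      refine Finset.sum_congr rfl fun i _ => ?_
      have hr : (R₀ j i : ℂ) = (R₀ i j : ℂ) := by rw [hR₀.apply i j]
      rw [hr]; ring
    calc ∑ j, ∑ i, I₀ i * (a ρ₀ i j * I' j)
        = ∑ j, ξ₀ * ∑ i, I₀ i * ((R₀ i j : ℂ) * I' j) := Finset.sum_congr rfl fun j _ => this j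
      _ = ξ₀ * ∑ j, ∑ i, I₀ i * ((R₀ i j : ℂ) * I' j) := by rw [Finset.mul_sum]
      _ = ξ₀ * T := by rw [hTdef, Finset.sum_comm]
  -- split D
  have hsplit : D = (-Complex.I * Q + ξ₀ * T) - (ξ' * S + ξ₀ * T) := by
    rw [hDdef]
    congr 1
    rw [← hC, hQdef]
    rw [Finset.mul_sum, ← Finset.sum_add_distrib]
    refine Finset.sum_congr rfl fun i _ => ?_
    rw [Finset.mul_sum, ← Finset.sum_add_distrib]
    refine Finset.sum_congr rfl fun j _ => ?_
    ring
  rw [hsplit] at hD0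
  -- convert goal
  have hSnz : S ≠ 0 := by
    simpa [dotProduct, Matrix.mulVec, Matrix.map_apply, Finset.mul_sum, hSdef,
      ← hI₀def] using hnz
  have hgoalQ : dotProduct (I ρ₀) ((Rρ'.map Complex.ofReal).mulVec (I ρ₀)) = Q := by
    simp [dotProduct, Matrix.mulVec, Matrix.map_apply, Finset.mul_sum, hQdef, ← hI₀def]
  have hgoalS : dotProduct (I ρ₀) ((R₀.map Complex.ofReal).mulVec (I ρ₀)) = S := by
    simp [dotProduct, Matrix.mulVec, Matrix.map_apply, Finset.mul_sum, hSdef, ← hI₀def]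
  rw [hgoalQ, hgoalS]
  field_simp
  linear_combination -hD0
end

section
/- (Adjoint sensitivity formula.) Let X₀, R₀ be real symmetric N×N matrices, ρ ↦ R_ρ(ρ) a function into real symmetric N×N matrices differentiable at ρ₀, and f : ℝ^N × ℝ^N × ℝ × ℝ × ℝ → ℝ differentiable at the point P₀ = (I_Re(ρ₀), I_Im(ρ₀), λ(ρ₀), δ(ρ₀), ρ₀). Suppose I_Re, I_Im : ℝ → ℝ^N and λ, δ : ℝ → ℝ are differentiable at ρ₀ and satisfy, for all ρ in a neighborhood of ρ₀: (i) (X₀ − λ(ρ)R₀)·I_Re(ρ) + (R_ρ(ρ) − δ(ρ)R₀)·I_Im(ρ) = 0; (ii) −(R_ρ(ρ) − δ(ρ)R₀)·I_Re(ρ) + (X₀ − λ(ρ)R₀)·I_Im(ρ) = 0; (iii) I_Re(ρ)ᵀ·R₀·I_Re(ρ) + I_Im(ρ)ᵀ·R₀·I_Im(ρ) = 1; (iv) the k-th entry of I_Im(ρ) is 0, for a fixed index k. Suppose z_Re, z_Im ∈ ℝ^N and a, b ∈ ℝ satisfy, with all partial derivatives of f evaluated at P₀ and all curves evaluated at ρ₀: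 (A) ∂f/∂λ = z_Reᵀ·R₀·I_Re + z_Imᵀ·R₀·I_Im; (B) ∂f/∂δ = z_Reᵀ·R₀·I_Im − z_Imᵀ·R₀·I_Re; (C) ∇_{I_Re} f + (X₀ − λR₀)·z_Re − (R_ρ − δR₀)·z_Im + 2a·R₀·I_Re = 0; (D) ∇_{I_Im} f + (R_ρ − δR₀)·z_Re + (X₀ − λR₀)·z_Im + 2a·R₀·I_Im + b·e_k = 0, where e_k is the k-th standard basis vector. Then the function ρ ↦ f(I_Re(ρ), I_Im(ρ), λ(ρ), δ(ρ), ρ) is differentiable at ρ₀ with derivative ∂f/∂ρ(P₀) + z_Reᵀ·R_ρ'(ρ₀)·I_Im(ρ₀) − z_Imᵀ·R_ρ'(ρ₀)·I_Re(ρ₀). -/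
lemma dot_symm' {N : ℕ} {M : Matrix (Fin N) (Fin N) ℝ} (hM : M.IsSymm) (x y : Fin N → ℝ) :
    dotProduct x (M.mulVec y) = dotProduct y (M.mulVec x) := by
  rw [Matrix.dotProduct_mulVec, ← Matrix.mulVec_transpose, hM, dotProduct_comm]

lemma key_aux {N : ℕ} (ρ₀ : ℝ) (z : ℝ → Fin N → ℝ) (z' : Fin N → ℝ)
    (M : ℝ → Matrix (Fin N) (Fin N) ℝ) (M' : Matrix (Fin N) (Fin N) ℝ)
    (v : ℝ → Fin N → ℝ) (v' : Fin N → ℝ)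
    (hz : ∀ i, HasDerivAt (fun ρ => z ρ i) (z' i) ρ₀)
    (hM : ∀ i j, HasDerivAt (fun ρ => M ρ i j) (M' i j) ρ₀)
    (hv : ∀ j, HasDerivAt (fun ρ => v ρ j) (v' j) ρ₀) :
    HasDerivAt (fun ρ => dotProduct (z ρ) ((M ρ).mulVec (v ρ)))
      (dotProduct z' ((M ρ₀).mulVec (v ρ₀))
        + dotProduct (z ρ₀) (M'.mulVec (v ρ₀))
        + dotProduct (z ρ₀) ((M ρ₀).mulVec v')) ρ₀ := by
  have H : HasDerivAt (fun ρ => ∑ i, ∑ j, z ρ i * (M ρ i j * v ρ j))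
      (∑ i, ∑ j, (z' i * (M ρ₀ i j * v ρ₀ j)
        + z ρ₀ i * (M' i j * v ρ₀ j + M ρ₀ i j * v' j))) ρ₀ := by
    apply HasDerivAt.fun_sum; intro i _
    apply HasDerivAt.fun_sum; intro j _
    exact (hz i).mul ((hM i j).mul (hv j))
  have hfun : (fun ρ => dotProduct (z ρ) ((M ρ).mulVec (v ρ)))
      = fun ρ => ∑ i, ∑ j, z ρ i * (M ρ i j * v ρ j) := by
    funext ρ; simp [dotProduct, Matrix.mulVec, Finset.mul_sum]
  have hval : dotProduct z' ((M ρ₀).mulVec (v ρ₀))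
        + dotProduct (z ρ₀) (M'.mulVec (v ρ₀))
        + dotProduct (z ρ₀) ((M ρ₀).mulVec v')
      = ∑ i, ∑ j, (z' i * (M ρ₀ i j * v ρ₀ j)
        + z ρ₀ i * (M' i j * v ρ₀ j + M ρ₀ i j * v' j)) := by
    simp [dotProduct, Matrix.mulVec, Finset.mul_sum, mul_add,
      Finset.sum_add_distrib]
    ring
  rw [hfun, hval]; exact H

/-- Adjoint sensitivity formula for characteristic-mode topology optimization:
given the real constraint system of the lossy characteristic-mode problem and
adjoint variables solving the adjoint equations (A)–(D), the total derivative of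
the objective along the design variable is
`∂f/∂ρ + z_Reᵀ·R_ρ'·I_Im − z_Imᵀ·R_ρ'·I_Re`. -/
theorem adjoint_sensitivity_formula
    (N : ℕ) (hN : 0 < N)
    (X₀ R₀ : Matrix (Fin N) (Fin N) ℝ)
    (hX : X₀.IsSymm) (hR₀ : R₀.IsSymm)
    (Rρ : ℝ → Matrix (Fin N) (Fin N) ℝ) (hsym : ∀ ρ, (Rρ ρ).IsSymm)
    (Rρ' : Matrix (Fin N) (Fin N) ℝ) (ρ₀ : ℝ)
    (hdRρ : ∀ i j, HasDerivAt (fun ρ => Rρ ρ i j) (Rρ' i j) ρ₀)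
    (IRe IIm : ℝ → Fin N → ℝ) (lam del : ℝ → ℝ)
    (hIRe : DifferentiableAt ℝ IRe ρ₀) (hIIm : DifferentiableAt ℝ IIm ρ₀)
    (hlam : DifferentiableAt ℝ lam ρ₀) (hdel : DifferentiableAt ℝ del ρ₀)
    (k : Fin N)
    (hc1 : ∀ᶠ ρ in nhds ρ₀,
      (X₀ - lam ρ • R₀).mulVec (IRe ρ) + (Rρ ρ - del ρ • R₀).mulVec (IIm ρ) = 0)
    (hc2 : ∀ᶠ ρ in nhds ρ₀,
      -((Rρ ρ - del ρ • R₀).mulVec (IRe ρ)) + (X₀ - lam ρ • R₀).mulVec (IIm ρ) = 0)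
    (hc3 : ∀ᶠ ρ in nhds ρ₀,
      dotProduct (IRe ρ) (R₀.mulVec (IRe ρ)) +
        dotProduct (IIm ρ) (R₀.mulVec (IIm ρ)) = 1)
    (hc4 : ∀ᶠ ρ in nhds ρ₀, IIm ρ k = 0)
    (f : (Fin N → ℝ) × (Fin N → ℝ) × ℝ × ℝ × ℝ → ℝ)
    (Df : ((Fin N → ℝ) × (Fin N → ℝ) × ℝ × ℝ × ℝ) →L[ℝ] ℝ)
    (hf : HasFDerivAt f Df (IRe ρ₀, IIm ρ₀, lam ρ₀, del ρ₀, ρ₀))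
    (zRe zIm : Fin N → ℝ) (a b : ℝ)
    (hA : Df (0, 0, 1, 0, 0) =
      dotProduct zRe (R₀.mulVec (IRe ρ₀)) +
        dotProduct zIm (R₀.mulVec (IIm ρ₀)))
    (hB : Df (0, 0, 0, 1, 0) =
      dotProduct zRe (R₀.mulVec (IIm ρ₀)) -
        dotProduct zIm (R₀.mulVec (IRe ρ₀)))
    (hC : ∀ i, Df (Pi.single i 1, 0, 0, 0, 0)
        + (X₀ - lam ρ₀ • R₀).mulVec zRe i
        - (Rρ ρ₀ - del ρ₀ • R₀).mulVec zIm i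
        + 2 * a * R₀.mulVec (IRe ρ₀) i = 0)
    (hD : ∀ i, Df (0, Pi.single i 1, 0, 0, 0)
        + (Rρ ρ₀ - del ρ₀ • R₀).mulVec zRe i
        + (X₀ - lam ρ₀ • R₀).mulVec zIm i
        + 2 * a * R₀.mulVec (IIm ρ₀) i
        + b * (if i = k then 1 else 0) = 0) :
    HasDerivAt (fun ρ => f (IRe ρ, IIm ρ, lam ρ, del ρ, ρ))
      (Df (0, 0, 0, 0, 1)
        + dotProduct zRe (Rρ'.mulVec (IIm ρ₀))
        - dotProduct zIm (Rρ'.mulVec (IRe ρ₀))) ρ₀ := by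
  classical
  have hvRe : ∀ j, HasDerivAt (fun ρ => IRe ρ j) (deriv IRe ρ₀ j) ρ₀ :=
    fun j => hasDerivAt_pi.mp hIRe.hasDerivAt j
  have hvIm : ∀ j, HasDerivAt (fun ρ => IIm ρ j) (deriv IIm ρ₀ j) ρ₀ :=
    fun j => hasDerivAt_pi.mp hIIm.hasDerivAt j
  set vRe := deriv IRe ρ₀ with hvRedef
  set vIm := deriv IIm ρ₀ with hvImdef
  set l' := deriv lam ρ₀ with hl'def
  set d' := deriv del ρ₀ with hd'def
  have hl : HasDerivAt lam l' ρ₀ := hlam.hasDerivAt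
  have hd : HasDerivAt del d' ρ₀ := hdel.hasDerivAt
  -- entrywise derivatives of the matrix curves
  have hM1 : ∀ i j, HasDerivAt (fun ρ => (X₀ - lam ρ • R₀) i j)
      (((-l') • R₀ : Matrix (Fin N) (Fin N) ℝ) i j) ρ₀ := by
    intro i j
    have := (hasDerivAt_const ρ₀ (X₀ i j)).fun_sub (hl.mul_const (R₀ i j))
    simpa [Matrix.sub_apply, Matrix.smul_apply, smul_eq_mul, neg_mul] using this
  have hM2 : ∀ i j, HasDerivAt (fun ρ => (Rρ ρ - del ρ • R₀) i j)
      ((Rρ' - d' • R₀ : Matrix (Fin N) (Fin N) ℝ) i j) ρ₀ := by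
    intro i j
    have := (hdRρ i j).fun_sub (hd.mul_const (R₀ i j))
    simpa [Matrix.sub_apply, Matrix.smul_apply, smul_eq_mul] using this
  have hMR : ∀ i j, HasDerivAt (fun _ : ℝ => R₀ i j)
      ((0 : Matrix (Fin N) (Fin N) ℝ) i j) ρ₀ := by
    intro i j; simpa using hasDerivAt_const ρ₀ (R₀ i j)
  have hzc : ∀ (z : Fin N → ℝ) (i : Fin N),
      HasDerivAt (fun _ : ℝ => z i) ((0 : Fin N → ℝ) i) ρ₀ := by
    intro z i; simpa using hasDerivAt_const ρ₀ (z i)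
  -- differentiated constraint (i), dotted with zRe
  have hd1 := (key_aux ρ₀ (fun _ => zRe) 0 (fun ρ => X₀ - lam ρ • R₀)
      ((-l') • R₀) IRe vRe (hzc zRe) hM1 hvRe).add
    (key_aux ρ₀ (fun _ => zRe) 0 (fun ρ => Rρ ρ - del ρ • R₀)
      (Rρ' - d' • R₀) IIm vIm (hzc zRe) hM2 hvIm)
  have hz1 : (fun ρ => dotProduct zRe ((X₀ - lam ρ • R₀).mulVec (IRe ρ))
      + dotProduct zRe ((Rρ ρ - del ρ • R₀).mulVec (IIm ρ)))
      =ᶠ[nhds ρ₀] fun _ => (0:ℝ) := by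
    filter_upwards [hc1] with ρ h
    have := congrArg (fun w => dotProduct zRe w) h
    simpa [dotProduct_add] using this
  have hE1 := (hd1.congr_of_eventuallyEq hz1.symm).unique (hasDerivAt_const ρ₀ 0)
  -- differentiated constraint (ii), dotted with zIm
  have hd2 := ((key_aux ρ₀ (fun _ => zIm) 0 (fun ρ => Rρ ρ - del ρ • R₀)
      (Rρ' - d' • R₀) IRe vRe (hzc zIm) hM2 hvRe).neg).add
    (key_aux ρ₀ (fun _ => zIm) 0 (fun ρ => X₀ - lam ρ • R₀)
      ((-l') • R₀) IIm vIm (hzc zIm) hM1 hvIm)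
  have hz2 : (fun ρ => -(dotProduct zIm ((Rρ ρ - del ρ • R₀).mulVec (IRe ρ)))
      + dotProduct zIm ((X₀ - lam ρ • R₀).mulVec (IIm ρ)))
      =ᶠ[nhds ρ₀] fun _ => (0:ℝ) := by
    filter_upwards [hc2] with ρ h
    have := congrArg (fun w => dotProduct zIm w) h
    simpa [dotProduct_add, dotProduct_neg] using this
  have hE2 := (hd2.congr_of_eventuallyEq hz2.symm).unique (hasDerivAt_const ρ₀ 0)
  -- differentiated normalization (iii)
  have hd3 := (key_aux ρ₀ IRe vRe (fun _ => R₀) 0 IRe vRe hvRe hMR hvRe).add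
    (key_aux ρ₀ IIm vIm (fun _ => R₀) 0 IIm vIm hvIm hMR hvIm)
  have hz3 : (fun ρ => dotProduct (IRe ρ) (R₀.mulVec (IRe ρ))
      + dotProduct (IIm ρ) (R₀.mulVec (IIm ρ)))
      =ᶠ[nhds ρ₀] fun _ => (1:ℝ) := hc3
  have hE3 := (hd3.congr_of_eventuallyEq hz3.symm).unique (hasDerivAt_const ρ₀ 1)
  -- differentiated phase condition (iv)
  have hz4 : (fun ρ => IIm ρ k) =ᶠ[nhds ρ₀] fun _ => (0:ℝ) := hc4
  have hE4 : vIm k = 0 :=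
    (((hvIm k).congr_of_eventuallyEq hz4.symm).unique (hasDerivAt_const ρ₀ 0))
  -- chain rule
  have hprod : HasDerivAt (fun ρ => (IRe ρ, IIm ρ, lam ρ, del ρ, ρ))
      ((vRe, vIm, l', d', 1) : (Fin N → ℝ) × (Fin N → ℝ) × ℝ × ℝ × ℝ) ρ₀ :=
    HasDerivAt.prodMk hIRe.hasDerivAt (HasDerivAt.prodMk hIIm.hasDerivAt (hl.prodMk (hd.prodMk (hasDerivAt_id ρ₀))))
  have hmain : HasDerivAt (fun ρ => f (IRe ρ, IIm ρ, lam ρ, del ρ, ρ))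
      (Df (vRe, vIm, l', d', 1)) ρ₀ := hf.comp_hasDerivAt ρ₀ hprod
  -- linear decomposition of Df applied to the velocity
  have hsingle : ∀ (x : Fin N → ℝ), x = ∑ i, x i • (Pi.single i 1 : Fin N → ℝ) := by
    intro x; funext j
    simp [Finset.sum_apply, Pi.single_apply, mul_ite]
  have h1 : ((vRe, vIm, l', d', (1:ℝ)) : (Fin N → ℝ) × (Fin N → ℝ) × ℝ × ℝ × ℝ)
      = (∑ i, vRe i • (((Pi.single i 1 : Fin N → ℝ), (0:Fin N → ℝ), (0:ℝ), (0:ℝ), (0:ℝ)) :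
          (Fin N → ℝ) × (Fin N → ℝ) × ℝ × ℝ × ℝ))
      + (∑ i, vIm i • (((0:Fin N → ℝ), (Pi.single i 1 : Fin N → ℝ), (0:ℝ), (0:ℝ), (0:ℝ)) :
          (Fin N → ℝ) × (Fin N → ℝ) × ℝ × ℝ × ℝ))
      + l' • ((0:Fin N → ℝ), (0:Fin N → ℝ), (1:ℝ), (0:ℝ), (0:ℝ))
      + d' • ((0:Fin N → ℝ), (0:Fin N → ℝ), (0:ℝ), (1:ℝ), (0:ℝ))
      + ((0:Fin N → ℝ), (0:Fin N → ℝ), (0:ℝ), (0:ℝ), (1:ℝ)) := by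
    refine Prod.ext ?_ (Prod.ext ?_ (Prod.ext ?_ (Prod.ext ?_ ?_))) <;>
      simp [Prod.fst_sum, Prod.snd_sum] <;>
      · funext j
        simp [Finset.sum_apply, Pi.single_apply, mul_ite]
  have hDfsplit : Df (vRe, vIm, l', d', 1)
      = (∑ i, vRe i * Df (Pi.single i 1, 0, 0, 0, 0))
      + (∑ i, vIm i * Df (0, Pi.single i 1, 0, 0, 0))
      + l' * Df (0, 0, 1, 0, 0) + d' * Df (0, 0, 0, 1, 0) + Df (0, 0, 0, 0, 1) := by
    rw [h1]
    simp only [map_add, map_sum, map_smul, smul_eq_mul]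
  -- rewrite the two sums using the adjoint equations
  have hCvec : (fun i => Df (Pi.single i 1, 0, 0, 0, 0))
      = -((X₀ - lam ρ₀ • R₀).mulVec zRe) + (Rρ ρ₀ - del ρ₀ • R₀).mulVec zIm
        - (2*a) • (R₀.mulVec (IRe ρ₀)) := by
    funext i
    have h := hC i
    simp only [Pi.add_apply, Pi.sub_apply, Pi.neg_apply, Pi.smul_apply, smul_eq_mul]
    linarith
  have hDvec : (fun i => Df (0, Pi.single i 1, 0, 0, 0))
      = -((Rρ ρ₀ - del ρ₀ • R₀).mulVec zRe) - (X₀ - lam ρ₀ • R₀).mulVec zIm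
        - (2*a) • (R₀.mulVec (IIm ρ₀)) - b • (Pi.single k 1 : Fin N → ℝ) := by
    funext i
    have h := hD i
    simp only [Pi.add_apply, Pi.sub_apply, Pi.neg_apply, Pi.smul_apply, smul_eq_mul,
      Pi.single_apply]
    split_ifs at h ⊢ <;> linarith
  have hCsum : (∑ i, vRe i * Df (Pi.single i 1, 0, 0, 0, 0))
      = dotProduct vRe (-((X₀ - lam ρ₀ • R₀).mulVec zRe)
          + (Rρ ρ₀ - del ρ₀ • R₀).mulVec zIm - (2*a) • (R₀.mulVec (IRe ρ₀))) := by
    rw [show (∑ i, vRe i * Df (Pi.single i 1, 0, 0, 0, 0))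
        = dotProduct vRe (fun i => Df (Pi.single i 1, 0, 0, 0, 0)) from rfl, hCvec]
  have hDsum : (∑ i, vIm i * Df (0, Pi.single i 1, 0, 0, 0))
      = dotProduct vIm (-((Rρ ρ₀ - del ρ₀ • R₀).mulVec zRe)
          - (X₀ - lam ρ₀ • R₀).mulVec zIm - (2*a) • (R₀.mulVec (IIm ρ₀))
          - b • (Pi.single k 1 : Fin N → ℝ)) := by
    rw [show (∑ i, vIm i * Df (0, Pi.single i 1, 0, 0, 0))
        = dotProduct vIm (fun i => Df (0, Pi.single i 1, 0, 0, 0)) from rfl, hDvec]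
  have hvk : dotProduct vIm (Pi.single k 1 : Fin N → ℝ) = vIm k := by
    simp [dotProduct, Pi.single_apply, mul_ite, Finset.sum_ite_eq, Finset.sum_ite_eq']
  -- the key scalar identity
  have hkey : Df (vRe, vIm, l', d', 1)
      = Df (0, 0, 0, 0, 1)
        + dotProduct zRe (Rρ'.mulVec (IIm ρ₀))
        - dotProduct zIm (Rρ'.mulVec (IRe ρ₀)) := by
    rw [hDfsplit, hCsum, hDsum, hA, hB]
    simp only [zero_dotProduct, dotProduct_add, dotProduct_sub,
      dotProduct_neg, dotProduct_smul, Matrix.sub_mulVec,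
      Matrix.smul_mulVec, smul_eq_mul, zero_add, add_zero,
      Matrix.zero_mulVec, dotProduct_zero] at hE1 hE2 hE3 ⊢
    rw [hvk]
    have s1 := dot_symm' hX vRe zRe
    have s2 := dot_symm' hR₀ vRe zRe
    have s3 := dot_symm' (hsym ρ₀) vRe zIm
    have s4 := dot_symm' hR₀ vRe zIm
    have s5 := dot_symm' (hsym ρ₀) vIm zRe
    have s6 := dot_symm' hR₀ vIm zRe
    have s7 := dot_symm' hX vIm zIm
    have s8 := dot_symm' hR₀ vIm zIm
    have s9 := dot_symm' hR₀ (IRe ρ₀) vRe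
    have s10 := dot_symm' hR₀ (IIm ρ₀) vIm
    linear_combination -hE1 - hE2 - a*hE3 - b*hE4 - s1 + lam ρ₀ * s2 + s3 - del ρ₀ * s4 - s5 + del ρ₀ * s6 - s7 + lam ρ₀ * s8 + a * s9 + a * s10
  exact hkey ▸ hmain
end

section
/- Let ξ ∈ ℂ and suppose the kernel of the complex matrix X₀ − i·R_ρ − ξ·R₀ is one-dimensional. Let I, J ∈ ℂ^N satisfy (X₀ − i·R_ρ)·I = ξ·R₀·I, (X₀ − i·R_ρ)·J = ξ·R₀·J, the normalizations I^H·R₀·I = 1 and J^H·R₀·J = 1, and suppose that for some index k the k-th entries of I and J are both real with the k-th entry of I nonzero. Then J = I or J = −I. -/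
/-- For a nondegenerate lossy characteristic mode, the normalization and the
phase constraint determine the characteristic current up to sign. -/
theorem lossy_cm_current_unique_up_to_sign
    (N : ℕ) (hN : 0 < N)
    (X₀ Rρ R₀ : Matrix (Fin N) (Fin N) ℝ)
    (hX : X₀.IsSymm) (hRρ : Rρ.IsSymm) (hR₀ : R₀.IsSymm)
    (hPD : R₀.PosDef)
    (ξ : ℂ)
    (hker : Module.finrank ℂ
      (LinearMap.ker (Matrix.mulVecLin
        (X₀.map Complex.ofReal - Complex.I • Rρ.map Complex.ofReal
          - ξ • R₀.map Complex.ofReal))) = 1)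
    (I J : Fin N → ℂ)
    (heigI : (X₀.map Complex.ofReal - Complex.I • Rρ.map Complex.ofReal).mulVec I
            = ξ • (R₀.map Complex.ofReal).mulVec I)
    (heigJ : (X₀.map Complex.ofReal - Complex.I • Rρ.map Complex.ofReal).mulVec J
            = ξ • (R₀.map Complex.ofReal).mulVec J)
    (hnormI : dotProduct (star I) ((R₀.map Complex.ofReal).mulVec I) = 1)
    (hnormJ : dotProduct (star J) ((R₀.map Complex.ofReal).mulVec J) = 1)
    (k : Fin N)
    (hIk : (I k).im = 0) (hJk : (J k).im = 0) (hIkne : I k ≠ 0) :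
    J = I ∨ J = -I := by
  set A := X₀.map Complex.ofReal - Complex.I • Rρ.map Complex.ofReal
    - ξ • R₀.map Complex.ofReal with hA
  have hmem : ∀ v : Fin N → ℂ,
      (X₀.map Complex.ofReal - Complex.I • Rρ.map Complex.ofReal).mulVec v
        = ξ • (R₀.map Complex.ofReal).mulVec v →
      v ∈ LinearMap.ker A.mulVecLin := by
    intro v hv
    simp only [LinearMap.mem_ker, Matrix.mulVecLin_apply, hA, Matrix.sub_mulVec,
      Matrix.smul_mulVec, hv]
    abel
  have hI : (⟨I, hmem I heigI⟩ : LinearMap.ker A.mulVecLin) ≠ 0 := by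
    intro h
    apply hIkne
    have := congrArg (fun v : LinearMap.ker A.mulVecLin => (v : Fin N → ℂ) k) h
    simpa using this
  obtain ⟨c, hc⟩ := (finrank_eq_one_iff_of_nonzero' _ hI).mp hker ⟨J, hmem J heigJ⟩
  have hJI : J = c • I := by
    have := congrArg (fun v : LinearMap.ker A.mulVecLin => (v : Fin N → ℂ)) hc
    simpa [eq_comm] using this
  -- c is real
  have hJk' : (c * I k).im = 0 := by
    have : J k = c * I k := by rw [hJI]; rfl
    rw [← this]; exact hJk
  have hre : (I k).re ≠ 0 := by
    intro h; exact hIkne (Complex.ext h hIk)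
  have hcim : c.im = 0 := by
    have := hJk'
    rw [Complex.mul_im, hIk, mul_zero, zero_add] at this
    exact (mul_eq_zero.mp this).resolve_right hre
  -- |c|^2 = 1
  have hcc : star c * c = 1 := by
    have : dotProduct (star (c • I)) ((R₀.map Complex.ofReal).mulVec (c • I)) = 1 := by
      rw [← hJI]; exact hnormJ
    rw [star_smul, Matrix.mulVec_smul, smul_dotProduct, dotProduct_smul,
      hnormI] at this
    simpa [mul_assoc] using this
  have hcstar : star c = c := by
    rw [Complex.star_def, Complex.conj_eq_iff_im]; exact hcim
  rw [hcstar] at hcc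
  rcases mul_self_eq_one_iff.mp hcc with h1 | h1
  · left; rw [hJI, h1, one_smul]
  · right; rw [hJI, h1, neg_smul, one_smul]
end
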